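/- Suppose int K ≠ ∅. If there exists x* ∈ K⁺ \ {0} such that x* attains a minimum on A, then A has a weak Pareto minimum with respect to K. Conversely, if A + K is convex (A is K-convex) and a ∈ A is a weak Pareto minimum of A, then there exists x* ∈ K⁺ \ {0} with x*(a) ≤ x*(b) for all b ∈ A. -/

import Mathlib

open Pointwise

/-- If a continuous linear functional is nonnegative on `K` and vanishes at an
interior point of `K`, it is zero. -/
lemma zero_of_vanish_interior
    {X : Type*} [NormedAddCommGroup X] [NormedSpace ℝ X]
    (K : Set X) (f : X →L[ℝ] ℝ) (hf : ∀ k ∈ K, 0 ≤ f k)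
    {e : X} (he : e ∈ interior K) (hfe : f e = 0) : f = 0 := by
  obtain ⟨ε, hε, hball⟩ := Metric.isOpen_iff.1 isOpen_interior e he
  have hzero : ∀ v : X, ‖v‖ < ε → f v = 0 := by
    intro v hv
    have h1 : e + v ∈ K := interior_subset (hball (by
      simpa [Metric.mem_ball, dist_eq_norm] using hv))
    have h2 : e - v ∈ K := interior_subset (hball (by
      simpa [Metric.mem_ball, dist_eq_norm, norm_sub_rev] using hv))
    have := hf _ h1
    have := hf _ h2
    simp only [map_add, map_sub, hfe] at *
    linarith
  ext x
  rcases eq_or_ne x 0 with rfl | hx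
  · simp
  · have hnx : 0 < ‖x‖ := norm_pos_iff.2 hx
    set c : ℝ := ε / (2 * ‖x‖) with hc
    have hcpos : 0 < c := by positivity
    have hnorm : ‖c • x‖ < ε := by
      rw [norm_smul, Real.norm_eq_abs, abs_of_pos hcpos, hc]
      rw [div_mul_eq_mul_div, mul_comm 2 ‖x‖, ← div_div, mul_div_assoc,
        div_self (ne_of_gt hnx), mul_one]
      linarith
    have := hzero _ hnorm
    rw [map_smul] at this
    have : f x = 0 := by
      have := mul_eq_zero.1 this
      rcases this with h | h
      · exact absurd h (ne_of_gt hcpos)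
      · exact h
    simpa using this

/-- Existence of a minimizing nonzero positive functional yields a weak Pareto
minimum; conversely for K-convex `A`, a weak Pareto minimum is supported by a
nonzero positive functional. -/
theorem pareto_scalarization
    {X : Type*} [NormedAddCommGroup X] [NormedSpace ℝ X]
    (K : Set X) (hKcl : IsClosed K) (hKconv : Convex ℝ K)
    (hK0 : (0 : X) ∈ K)
    (hKcone : ∀ t : ℝ, 0 ≤ t → ∀ y ∈ K, t • y ∈ K)
    (hint : (interior K).Nonempty)
    (A : Set X) (hA : A.Nonempty) :
    ((∃ f : X →L[ℝ] ℝ, f ≠ 0 ∧ (∀ k ∈ K, 0 ≤ f k) ∧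
        ∃ a ∈ A, ∀ b ∈ A, f a ≤ f b) →
      ∃ a ∈ A, ∀ b ∈ A, b - a ∉ -interior K) ∧
    (Convex ℝ (A + K) →
      ∀ a ∈ A, (∀ b ∈ A, b - a ∉ -interior K) →
        ∃ f : X →L[ℝ] ℝ, f ≠ 0 ∧ (∀ k ∈ K, 0 ≤ f k) ∧ ∀ b ∈ A, f a ≤ f b) := by
  -- K is closed under addition
  have hKadd : ∀ k1 ∈ K, ∀ k2 ∈ K, k1 + k2 ∈ K := by
    intro k1 h1 k2 h2
    have hmid : (1/2 : ℝ) • k1 + (1/2 : ℝ) • k2 ∈ K :=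
      hKconv h1 h2 (by norm_num) (by norm_num) (by norm_num)
    have := hKcone 2 (by norm_num) _ hmid
    simpa [smul_add, smul_smul] using this
  -- interior K is closed under positive scaling
  have hint_smul : ∀ t : ℝ, 0 < t → ∀ e ∈ interior K, t • e ∈ interior K := by
    intro t ht e he
    have hopen : IsOpen (t • interior K) := isOpen_interior.smul₀ (ne_of_gt ht)
    have hsub : t • interior K ⊆ K := by
      rintro _ ⟨y, hy, rfl⟩
      exact hKcone t ht.le y (interior_subset hy)
    exact interior_maximal hsub hopen ⟨e, he, rfl⟩
  -- interior K + K ⊆ interior K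
  have hint_add : ∀ e ∈ interior K, ∀ k ∈ K, e + k ∈ interior K := by
    intro e he k hk
    have hopen : IsOpen (interior K + K) := isOpen_interior.add_right
    have hsub : interior K + K ⊆ K := by
      rintro _ ⟨x, hx, y, hy, rfl⟩
      exact hKadd x (interior_subset hx) y hy
    exact interior_maximal hsub hopen ⟨e, he, k, hk, rfl⟩
  constructor
  · rintro ⟨f, hf0, hfK, a, haA, hmin⟩
    refine ⟨a, haA, fun b hb hcontra => ?_⟩
    rw [Set.mem_neg] at hcontra
    have hab : a - b ∈ interior K := by simpa [neg_sub] using hcontra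
    have h1 : 0 ≤ f (a - b) := hfK _ (interior_subset hab)
    have h2 : f a ≤ f b := hmin b hb
    have h3 : f (a - b) = 0 := by
      rw [map_sub]; linarith [map_sub f a b ▸ h1]
    exact hf0 (zero_of_vanish_interior K f hfK hab h3)
  · intro hconv a haA hPareto
    obtain ⟨e₀, he₀⟩ := hint
    -- separate `{a} + -interior K` from `A + K`
    have hsconv : Convex ℝ ({a} + -interior K) :=
      (convex_singleton a).add hKconv.interior.neg
    have hsopen : IsOpen ({a} + -interior K) :=
      isOpen_interior.neg.add_left
    have hdisj : Disjoint ({a} + -interior K) (A + K) := by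
      rw [Set.disjoint_left]
      rintro x ⟨a', ha', y, hy, rfl⟩ ⟨b, hb, k, hk, hbk⟩
      rw [Set.mem_singleton_iff] at ha'
      rw [Set.mem_neg] at hy
      have hmem : (-y) + k ∈ interior K := hint_add _ hy _ hk
      have hba : b - a ∈ -interior K := by
        rw [Set.mem_neg]
        have heq : a + y = b + k := by rw [← ha']; exact hbk.symm
        have hneg : -(b - a) = (-y) + k := by
          calc -(b - a) = (a + y) - y - b := by abel
            _ = (b + k) - y - b := by rw [heq]
            _ = (-y) + k := by abel
        rw [← hneg] at hmem
        simpa using hmem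
      exact hPareto b hb hba
    obtain ⟨f, u, hfs, hft⟩ :=
      geometric_hahn_banach_open hsconv hsopen hconv hdisj
    -- f a ≤ u
    have hau : ∀ t : ℝ, 0 < t → f a - t * f e₀ < u := by
      intro t ht
      have hmem : a + (-(t • e₀)) ∈ {a} + -interior K :=
        ⟨a, rfl, -(t • e₀), by rw [Set.mem_neg]; simpa using hint_smul t ht e₀ he₀, rfl⟩
      have h := hfs _ hmem
      rw [map_add, map_neg, map_smul, smul_eq_mul] at h
      linarith
    have hua : u ≤ f a := by
      have : a ∈ A + K := ⟨a, haA, 0, hK0, by simp⟩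
      exact hft a this
    -- show f a ≤ u
    have hfa_le_u : f a ≤ u := by
      by_contra h
      push_neg at h
      rcases lt_trichotomy (f e₀) 0 with hneg | hzero | hpos
      · have := hau 1 one_pos
        nlinarith
      · have := hau 1 one_pos
        nlinarith
      · set t := (f a - u) / (2 * f e₀) with htdef
        have ht : 0 < t := div_pos (by linarith) (by linarith)
        have := hau t ht
        rw [htdef] at this
        have heq : f a - (f a - u) / (2 * f e₀) * f e₀ = f a - (f a - u) / 2 := by
          field_simp
        nlinarith [hau t ht]
    -- positivity on K
    have hfK : ∀ k ∈ K, 0 ≤ f k := by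
      intro k hk
      by_contra h
      push_neg at h
      set t := (f a - u + 1) / (-f k) with htdef
      have ht : 0 ≤ t := by
        apply div_nonneg
        · linarith
        · linarith
      have hmem : a + t • k ∈ A + K := ⟨a, haA, t • k, hKcone t ht k hk, rfl⟩
      have hle := hft _ hmem
      rw [map_add, map_smul, smul_eq_mul, htdef] at hle
      have hfk : -f k > 0 := by linarith
      have heq2 : (f a - u + 1) / (-f k) * f k = -(f a - u + 1) := by
        rw [div_mul_eq_mul_div, div_eq_iff (ne_of_gt hfk)]
        ring
      rw [heq2] at hle
      linarith
    -- f ≠ 0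
    have hf0 : f ≠ 0 := by
      intro hzero
      have h1 := hau 1 one_pos
      rw [hzero] at h1 hua
      simp at h1 hua
      linarith
    exact ⟨f, hf0, hfK, fun b hb => le_trans hfa_le_u (hft b ⟨b, hb, 0, hK0, by simp⟩)⟩
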